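/- Let H be a complex Hilbert space and A ∈ B(H) hyponormal with spectrum contained in the imaginary axis iℝ. Then A is skew-adjoint, i.e., A* = -A. -/

import Mathlib

open ContinuousLinearMap Complex

variable {H : Type*} [NormedAddCommGroup H] [InnerProductSpace ℂ H] [CompleteSpace H]

local notation "⟪" x ", " y "⟫" => @inner ℂ _ _ x y

lemma hyp_key (T : H →L[ℂ] H) (hT : ∀ x : H, ‖adjoint T x‖ ≤ ‖T x‖) (n : ℕ) (x : H) :
    ‖(T ^ (n + 1)) x‖ ^ 2 ≤ ‖(T ^ (n + 2)) x‖ * ‖(T ^ n) x‖ := by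
  have h1 : (T ^ (n + 1)) x = T ((T ^ n) x) := by
    rw [pow_succ']; rfl
  have h2 : (T ^ (n + 2)) x = T ((T ^ (n + 1)) x) := by
    rw [pow_succ']; rfl
  calc ‖(T ^ (n + 1)) x‖ ^ 2 = re ⟪(T ^ (n + 1)) x, (T ^ (n + 1)) x⟫ := by
        exact (@inner_self_eq_norm_sq ℂ _ _ _ _ _).symm
    _ = re ⟪(T ^ n) x, adjoint T ((T ^ (n + 1)) x)⟫ := by
        rw [adjoint_inner_right, ← h1]
    _ ≤ ‖⟪(T ^ n) x, adjoint T ((T ^ (n + 1)) x)⟫‖ := Complex.re_le_norm _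
    _ ≤ ‖(T ^ n) x‖ * ‖adjoint T ((T ^ (n + 1)) x)‖ := norm_inner_le_norm _ _
    _ ≤ ‖(T ^ n) x‖ * ‖T ((T ^ (n + 1)) x)‖ := by
        gcongr; exact hT _
    _ = ‖(T ^ (n + 2)) x‖ * ‖(T ^ n) x‖ := by rw [← h2, mul_comm]

lemma hyp_pow_norm [Nontrivial H] (T : H →L[ℂ] H) (hT : ∀ x : H, ‖adjoint T x‖ ≤ ‖T x‖)
    (n : ℕ) : ‖T ^ n‖ = ‖T‖ ^ n := by
  have key : ∀ m : ℕ, ‖T ^ (m + 1)‖ ^ 2 ≤ ‖T ^ (m + 2)‖ * ‖T ^ m‖ := by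
    intro m
    have c0 : 0 ≤ ‖T ^ (m + 2)‖ * ‖T ^ m‖ := by positivity
    have hb : ∀ x : H, ‖(T ^ (m + 1)) x‖ ≤ Real.sqrt (‖T ^ (m + 2)‖ * ‖T ^ m‖) * ‖x‖ := by
      intro x
      have h := hyp_key T hT m x
      have h2 : ‖(T ^ (m + 2)) x‖ * ‖(T ^ m) x‖ ≤ (‖T ^ (m + 2)‖ * ‖T ^ m‖) * ‖x‖ ^ 2 := by
        have := (T ^ (m + 2)).le_opNorm x
        have := (T ^ m).le_opNorm x
        nlinarith [norm_nonneg ((T ^ (m + 2)) x), norm_nonneg ((T ^ m) x), norm_nonneg x,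
          (T ^ (m + 2)).opNorm_nonneg, (T ^ m).opNorm_nonneg]
      have h3 : ‖(T ^ (m + 1)) x‖ ^ 2 ≤ (Real.sqrt (‖T ^ (m + 2)‖ * ‖T ^ m‖) * ‖x‖) ^ 2 := by
        rw [mul_pow, Real.sq_sqrt c0]
        exact h.trans h2
      calc ‖(T ^ (m + 1)) x‖ = Real.sqrt (‖(T ^ (m + 1)) x‖ ^ 2) := by
            rw [Real.sqrt_sq (norm_nonneg _)]
        _ ≤ Real.sqrt ((Real.sqrt (‖T ^ (m + 2)‖ * ‖T ^ m‖) * ‖x‖) ^ 2) := Real.sqrt_le_sqrt h3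
        _ = Real.sqrt (‖T ^ (m + 2)‖ * ‖T ^ m‖) * ‖x‖ := Real.sqrt_sq (by positivity)
    have hop := opNorm_le_bound _ (by positivity) hb
    calc ‖T ^ (m + 1)‖ ^ 2 ≤ Real.sqrt (‖T ^ (m + 2)‖ * ‖T ^ m‖) ^ 2 := by
          have := (T ^ (m + 1)).opNorm_nonneg
          nlinarith [Real.sqrt_nonneg (‖T ^ (m + 2)‖ * ‖T ^ m‖)]
      _ = ‖T ^ (m + 2)‖ * ‖T ^ m‖ := Real.sq_sqrt c0
  -- now strong two-step induction
  have main : ∀ m : ℕ, ‖T ^ m‖ = ‖T‖ ^ m ∧ ‖T ^ (m + 1)‖ = ‖T‖ ^ (m + 1) := by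
    intro m
    induction m with
    | zero => simp
    | succ k ih =>
      obtain ⟨h1, h2⟩ := ih
      refine ⟨h2, le_antisymm (norm_pow_le _ _) ?_⟩
      rcases eq_or_lt_of_le (norm_nonneg T) with hz | hz
      · have : T = 0 := by rwa [eq_comm, norm_eq_zero] at hz
        simp [this, ← hz, zero_pow]
      · have hk := key k
        rw [h1, h2] at hk
        have hpow : ‖T‖ ^ (k + 1) * ‖T‖ ^ (k + 1) = (‖T‖ ^ (k + 2) * ‖T‖ ^ k) := by ring
        have hkpos : (0:ℝ) < ‖T‖ ^ k := pow_pos hz k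
        nlinarith [pow_pos hz (k + 2)]
  exact (main n).1

lemma hyp_spectralRadius [Nontrivial H] (T : H →L[ℂ] H)
    (hT : ∀ x : H, ‖adjoint T x‖ ≤ ‖T x‖) :
    spectralRadius ℂ T = (‖T‖₊ : ENNReal) := by
  have htend := spectrum.pow_nnnorm_pow_one_div_tendsto_nhds_spectralRadius T
  have hconst : ∀ᶠ n : ℕ in Filter.atTop,
      ((‖T ^ n‖₊ : ENNReal) ^ (1 / (n : ℝ))) = (‖T‖₊ : ENNReal) := by
    filter_upwards [Filter.eventually_gt_atTop 0] with n hn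
    have : ‖T ^ n‖₊ = ‖T‖₊ ^ n := by
      ext
      push_cast
      exact hyp_pow_norm T hT n
    rw [this]
    push_cast
    rw [← ENNReal.rpow_natCast (‖T‖₊ : ENNReal) n, ← ENNReal.rpow_mul,
      mul_one_div, div_self (by exact_mod_cast hn.ne' : (n:ℝ) ≠ 0), ENNReal.rpow_one]
  have h2 : Filter.Tendsto (fun n : ℕ => ((‖T ^ n‖₊ : ENNReal) ^ (1 / (n : ℝ))))
      Filter.atTop (nhds (‖T‖₊ : ENNReal)) :=
    Filter.Tendsto.congr' (Filter.EventuallyEq.symm hconst) tendsto_const_nhds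
  exact tendsto_nhds_unique htend h2

lemma shift_normsq (B : H →L[ℂ] H) (s : ℝ) (x : H) :
    ‖(B - (s : ℂ) • 1) x‖ ^ 2
      = ‖B x‖ ^ 2 - 2 * s * (⟪B x, x⟫).re + s ^ 2 * ‖x‖ ^ 2 := by
  have h1 : (B - (s : ℂ) • 1) x = B x - (s : ℂ) • x := by
    simp [ContinuousLinearMap.sub_apply, ContinuousLinearMap.smul_apply]
  rw [h1, @norm_sub_sq ℂ]
  have h2 : (⟪B x, (s : ℂ) • x⟫) = (s : ℂ) * ⟪B x, x⟫ := inner_smul_right _ _ _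
  have h3 : RCLike.re (⟪B x, (s : ℂ) • x⟫) = s * (⟪B x, x⟫).re := by
    rw [h2]; simp [Complex.mul_re]
  rw [h3, norm_smul]
  simp [Complex.norm_real, abs_mul]
  rw [mul_pow, _root_.sq_abs s]
  ring

lemma shift_hyp (A : H →L[ℂ] H) (hhyp : ∀ x : H, ‖adjoint A x‖ ≤ ‖A x‖) (s : ℝ) (x : H) :
    ‖adjoint (A - (s : ℂ) • 1) x‖ ≤ ‖(A - (s : ℂ) • 1) x‖ := by
  have hadj : adjoint (A - (s : ℂ) • 1) = adjoint A - (s : ℂ) • 1 := by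
    rw [← star_eq_adjoint, ← star_eq_adjoint, star_sub, star_smul, star_one]
    norm_num
  rw [hadj]
  have hre : (⟪adjoint A x, x⟫).re = (⟪A x, x⟫).re := by
    have : (⟪adjoint A x, x⟫) = ⟪x, A x⟫ := adjoint_inner_left A x x
    rw [this, ← inner_conj_symm (A x) x]
    exact Complex.conj_re _
  have h1 := shift_normsq (adjoint A) s x
  have h2 := shift_normsq A s x
  have h3 := hhyp x
  have h4 : ‖adjoint A x‖ ^ 2 ≤ ‖A x‖ ^ 2 := by
    nlinarith [norm_nonneg (adjoint A x), norm_nonneg (A x), hhyp x]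
  have hsq : ‖(adjoint A - (s : ℂ) • 1) x‖ ^ 2 ≤ ‖(A - (s : ℂ) • 1) x‖ ^ 2 := by
    rw [h1, h2, hre]; linarith
  have := Real.sqrt_le_sqrt hsq
  rwa [Real.sqrt_sq (norm_nonneg _), Real.sqrt_sq (norm_nonneg _)] at this

lemma shift_norm_bound [Nontrivial H] (A : H →L[ℂ] H)
    (hhyp : ∀ x : H, ‖adjoint A x‖ ≤ ‖A x‖)
    (hsp : ∀ z ∈ spectrum ℂ A, ∃ t : ℝ, z = t * Complex.I) (s : ℝ) :
    ‖A - (s : ℂ) • 1‖ ^ 2 ≤ ‖A‖ ^ 2 + s ^ 2 := by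
  set T := A - (s : ℂ) • 1 with hT
  set c := Real.sqrt (‖A‖ ^ 2 + s ^ 2) with hc
  have hc0 : 0 ≤ c := Real.sqrt_nonneg _
  have hrad : spectralRadius ℂ T = (‖T‖₊ : ENNReal) :=
    hyp_spectralRadius T (shift_hyp A hhyp s)
  have hspec : ∀ z ∈ spectrum ℂ T, ‖z‖ ≤ c := by
    intro z hz
    have : T = A - (algebraMap ℂ (H →L[ℂ] H)) (s : ℂ) := by
      rw [hT, Algebra.algebraMap_eq_smul_one]
    rw [this, ← spectrum.sub_singleton_eq] at hz
    obtain ⟨w, hw, u, hu, hwu⟩ := hz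
    rw [Set.mem_singleton_iff] at hu
    subst hu
    obtain ⟨t, ht⟩ := hsp w hw
    have hwnorm : ‖w‖ ≤ ‖A‖ := spectrum.norm_le_norm_of_mem hw
    have htle : |t| ≤ ‖A‖ := by
      rw [ht] at hwnorm
      simpa using hwnorm
    have hz2 : ‖z‖ ^ 2 = t ^ 2 + s ^ 2 := by
      rw [← hwu, ht]
      show ‖(t : ℂ) * Complex.I - (s : ℂ)‖ ^ 2 = t ^ 2 + s ^ 2
      rw [Complex.sq_norm, Complex.normSq_apply]
      simp [Complex.sub_re, Complex.sub_im, Complex.mul_re, Complex.mul_im]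
      ring
    have : ‖z‖ ^ 2 ≤ ‖A‖ ^ 2 + s ^ 2 := by
      rw [hz2]
      nlinarith [abs_nonneg t, norm_nonneg A, _root_.sq_abs t]
    calc ‖z‖ = Real.sqrt (‖z‖ ^ 2) := (Real.sqrt_sq (norm_nonneg _)).symm
      _ ≤ c := Real.sqrt_le_sqrt this
  have hradle : spectralRadius ℂ T ≤ (c.toNNReal : ENNReal) := by
    refine iSup₂_le fun z hz => ?_
    have := hspec z hz
    simp only [ENNReal.coe_le_coe]
    rw [← NNReal.coe_le_coe, coe_nnnorm, Real.coe_toNNReal _ hc0]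
    exact this
  rw [hrad] at hradle
  have hTc : ‖T‖ ≤ c := by
    have := ENNReal.coe_le_coe.mp hradle
    have h2 : (‖T‖₊ : ℝ) ≤ (c.toNNReal : ℝ) := this
    rwa [coe_nnnorm, Real.coe_toNNReal _ hc0] at h2
  calc ‖T‖ ^ 2 ≤ c ^ 2 := by nlinarith [norm_nonneg T]
    _ = ‖A‖ ^ 2 + s ^ 2 := Real.sq_sqrt (by positivity)

lemma linear_vanish {a C : ℝ} (h : ∀ s : ℝ, s * a ≤ C) : a = 0 := by
  by_contra ha
  rcases lt_or_gt_of_ne ha with h1 | h1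
  · have := h ((C + 1) / a)
    rw [div_mul_cancel₀ _ (ne_of_lt h1)] at this
    linarith
  · have := h ((C + 1) / a)
    rw [div_mul_cancel₀ _ (ne_of_gt h1)] at this
    linarith

theorem stmt14 (A : H →L[ℂ] H) (hhyp : ∀ x : H, ‖adjoint A x‖ ≤ ‖A x‖)
    (hsp : ∀ z ∈ spectrum ℂ A, ∃ t : ℝ, z = t * Complex.I) :
    adjoint A = -A := by
  rcases subsingleton_or_nontrivial H with hs | hs
  · ext x; exact Subsingleton.elim _ _
  have hre : ∀ x : H, (⟪A x, x⟫).re = 0 := by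
    intro x
    apply linear_vanish (C := ‖A‖ ^ 2 * ‖x‖ ^ 2)
    intro s
    have hb := shift_norm_bound A hhyp hsp (-s / 2)
    have hn := shift_normsq A (-s / 2) x
    have hle : ‖(A - ((-s / 2 : ℝ) : ℂ) • 1) x‖ ^ 2 ≤ (‖A‖ ^ 2 + (-s / 2) ^ 2) * ‖x‖ ^ 2 := by
      have h1 := (A - ((-s / 2 : ℝ) : ℂ) • 1).le_opNorm x
      nlinarith [norm_nonneg ((A - ((-s / 2 : ℝ) : ℂ) • 1) x), norm_nonneg x,
        (A - ((-s / 2 : ℝ) : ℂ) • 1).opNorm_nonneg, norm_nonneg A]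
    rw [hn] at hle
    nlinarith [sq_nonneg (‖A x‖), norm_nonneg x]
  have hB : (adjoint A + A : H →L[ℂ] H) = 0 := by
    have hz : ∀ x : H, ⟪(adjoint A + A) x, x⟫ = 0 := by
      intro x
      have h1 : (⟪adjoint A x, x⟫) = (starRingEnd ℂ) ⟪A x, x⟫ := by
        rw [adjoint_inner_left]
        exact (inner_conj_symm x (A x)).symm
      rw [ContinuousLinearMap.add_apply, inner_add_left, h1, add_comm,
        Complex.add_conj, hre x]
      simp
    have := (inner_map_self_eq_zero ((adjoint A + A : H →L[ℂ] H) : H →ₗ[ℂ] H)).mp hz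
    ext x
    have := LinearMap.congr_fun this x
    simpa using this
  exact eq_neg_of_add_eq_zero_left hB
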